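/- Fix ξ ∈ 𝔹_T^N. For every transient state x ∈ 𝔹_T^N, the rare-mutation conditional probability of x equals the fraction of sojourn time spent in x among all transient states: lim_{u→0} P_{π_⟲(ξ)}[X = x | X ∈ 𝔹_T^N] = t_ξ(x) / t_ξ(𝔹_T^N), where t_ξ(𝔹_T^N) = Σ_{y ∈ 𝔹_T^N} t_ξ(y). -/

import Mathlib

open Finset Filter Asymptotics Topology

namespace Evo

/-- A population state: each of the `N` individuals has type `A` (`true`) or `B` (`false`). -/
abbrev St (N : ℕ) := Fin N → Bool

/-- A replacement event `(R, α)`: the set `R` of replaced individuals together with a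
parentage map (only the values on `R` are relevant). -/
abbrev Event (N : ℕ) := Finset (Fin N) × (Fin N → Fin N)

/-- The extended parentage map `α̃`, equal to `α` on `R` and the identity off `R`. -/
def extMap {N : ℕ} (e : Event N) (i : Fin N) : Fin N := if i ∈ e.1 then e.2 i else i

/-- The state update induced by a replacement event: `x ↦ x_α̃`. -/
def upd {N : ℕ} (e : Event N) (x : St N) : St N := fun i => x (extMap e i)

/-- Boolean values as reals. -/
def bv (b : Bool) : ℝ := if b then 1 else 0

/-- The all-`A` state. -/
def stA (N : ℕ) : St N := fun _ => true

/-- The all-`B` state. -/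
def stB (N : ℕ) : St N := fun _ => false

/-- Transient (non-monoallelic) states, i.e. members of `𝔹_T^N`. -/
def Transient {N : ℕ} (x : St N) : Prop := x ≠ stA N ∧ x ≠ stB N

/-- A replacement rule: for each state, a probability distribution over replacement events. -/
def IsRule {N : ℕ} (p : St N → Event N → ℝ) : Prop :=
  (∀ x e, 0 ≤ p x e) ∧ ∀ x, ∑ e : Event N, p x e = 1

/-- A state-independent distribution over replacement events (a neutral replacement rule). -/
def IsDist {N : ℕ} (p0 : Event N → ℝ) : Prop :=
  (∀ e, 0 ≤ p0 e) ∧ ∑ e : Event N, p0 e = 1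

/-- Transition matrix of the Markov chain induced by a replacement rule. -/
def tmat {N : ℕ} (p : St N → Event N → ℝ) : Matrix (St N) (St N) ℝ :=
  Matrix.of fun x y => ∑ e : Event N, if upd e x = y then p x e else 0

/-- The Fixation Axiom. -/
def FixAxiom {N : ℕ} (p : St N → Event N → ℝ) : Prop :=
  ∃ (i : Fin N) (m : ℕ) (ev : Fin m → Event N), 1 ≤ m ∧
    (∀ k x, 0 < p x (ev k)) ∧ (∃ k, i ∈ (ev k).1) ∧
    (∀ j, (List.ofFn fun k => extMap (ev k)).foldr (· ∘ ·) id j = i)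

/-- The sojourn time `t_ξ(x)`: expected number of visits to `x` prior to absorption,
starting from `ξ` (expressed as `Σ_t (P^t)(ξ, x)`). -/
noncomputable def sojourn {N : ℕ} (p : St N → Event N → ℝ) (ξ x : St N) : ℝ :=
  ∑' t : ℕ, (tmat p ^ t) ξ x

/-- The amended transition matrix `P^⟲(ξ)`. -/
def amend {N : ℕ} (p : St N → Event N → ℝ) (ξ : St N) (u : ℝ) : Matrix (St N) (St N) ℝ :=
  Matrix.of fun x y =>
    if x = stA N ∨ x = stB N then (if y = ξ then u else (1 - u) * tmat p x y)
    else tmat p x y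

/-- `q` is a stationary distribution for the transition matrix `P`. -/
def IsStat {N : ℕ} (P : Matrix (St N) (St N) ℝ) (q : St N → ℝ) : Prop :=
  (∀ x, 0 ≤ q x) ∧ (∑ x : St N, q x = 1) ∧ ∀ y, ∑ x : St N, q x * P x y = q y

variable {N : ℕ} {p : St N → Event N → ℝ}

instance (x : St N) : Decidable (Transient x) :=
  inferInstanceAs (Decidable (x ≠ stA N ∧ x ≠ stB N))

abbrev TS (N : ℕ) := {x : St N // x ≠ stA N ∧ x ≠ stB N}

noncomputable def Qm (p : St N → Event N → ℝ) : Matrix (TS N) (TS N) ℝ :=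
  Matrix.of fun a b => tmat p a.1 b.1

lemma tmat_nonneg (hp : IsRule p) (x y : St N) : 0 ≤ tmat p x y := by
  simp only [tmat, Matrix.of_apply]
  refine Finset.sum_nonneg fun e _ => ?_
  by_cases h : upd e x = y <;> simp [h, hp.1]

lemma tmat_row_sum (hp : IsRule p) (x : St N) : ∑ y : St N, tmat p x y = 1 := by
  simp only [tmat, Matrix.of_apply]
  rw [Finset.sum_comm]
  have : ∀ e : Event N, (∑ y : St N, if upd e x = y then p x e else 0) = p x e := by
    intro e
    rw [Finset.sum_ite_eq univ (upd e x) (fun _ => p x e)]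
    simp
  simp only [this]
  exact hp.2 x

lemma le_tmat (hp : IsRule p) (x : St N) (e : Event N) : p x e ≤ tmat p x (upd e x) := by
  simp only [tmat, Matrix.of_apply]
  have := Finset.single_le_sum (f := fun e' : Event N => if upd e' x = upd e x then p x e' else 0)
    (fun e' _ => by by_cases h : upd e' x = upd e x <;> simp [h, hp.1]) (Finset.mem_univ e)
  simpa using this

lemma upd_stA (e : Event N) : upd e (stA N) = stA N := rfl
lemma upd_stB (e : Event N) : upd e (stB N) = stB N := rfl

lemma tmat_stA (hp : IsRule p) (y : St N) : tmat p (stA N) y = if stA N = y then 1 else 0 := by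
  simp only [tmat, Matrix.of_apply, upd_stA]
  by_cases h : stA N = y
  · subst h; simp [hp.2]
  · simp [h]

lemma tmat_stB (hp : IsRule p) (y : St N) : tmat p (stB N) y = if stB N = y then 1 else 0 := by
  simp only [tmat, Matrix.of_apply, upd_stB]
  by_cases h : stB N = y
  · subst h; simp [hp.2]
  · simp [h]

lemma sum_split (hAB : stA N ≠ stB N) (f : St N → ℝ) :
    ∑ x : St N, f x = f (stA N) + f (stB N) + ∑ a : TS N, f a.1 := by
  have h1 : ∑ a : TS N, f a.1
      = ∑ x ∈ univ.filter (fun x : St N => x ≠ stA N ∧ x ≠ stB N), f x :=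
    (Finset.sum_subtype _ (by simp) f).symm
  have h2 : univ.filter (fun x : St N => ¬(x ≠ stA N ∧ x ≠ stB N)) = {stA N, stB N} := by
    ext z
    simp only [Finset.mem_filter, Finset.mem_univ, true_and, Finset.mem_insert,
      Finset.mem_singleton, not_and_or, not_ne_iff]
  rw [h1, ← Finset.sum_filter_add_sum_filter_not univ (fun x : St N => x ≠ stA N ∧ x ≠ stB N) f,
    h2, Finset.sum_pair hAB]
  ring


lemma Qm_pow_nonneg (hp : IsRule p) : ∀ (t : ℕ) (a b : TS N), 0 ≤ (Qm p ^ t) a b := by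
  intro t
  induction t with
  | zero => intro a b; simp [Matrix.one_apply]; split <;> norm_num
  | succ t ih =>
    intro a b
    rw [pow_succ, Matrix.mul_apply]
    exact Finset.sum_nonneg fun c _ => mul_nonneg (ih a c) (tmat_nonneg hp _ _)

lemma pow_trans (hp : IsRule p) (hAB : stA N ≠ stB N) :
    ∀ (t : ℕ) (a b : TS N), (tmat p ^ t) a.1 b.1 = (Qm p ^ t) a b := by
  intro t
  induction t with
  | zero =>
    intro a b
    simp [Matrix.one_apply, Subtype.ext_iff]
  | succ t ih =>
    intro a b
    rw [pow_succ, pow_succ, Matrix.mul_apply, Matrix.mul_apply]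
    rw [sum_split hAB (fun y => (tmat p ^ t) a.1 y * tmat p y b.1)]
    rw [tmat_stA hp, tmat_stB hp, if_neg (fun h => b.2.1 h.symm), if_neg (fun h => b.2.2 h.symm)]
    simp only [mul_zero, zero_add, add_zero]
    exact Finset.sum_congr rfl fun c _ => by rw [ih a c]; rfl

lemma rowsum_mul (A B : Matrix (TS N) (TS N) ℝ) (a : TS N) :
    ∑ b : TS N, (A * B) a b = ∑ c : TS N, A a c * ∑ b : TS N, B c b := by
  simp only [Matrix.mul_apply, Finset.mul_sum]
  exact Finset.sum_comm

lemma Qm_rowsum_le (hp : IsRule p) (hAB : stA N ≠ stB N) (a : TS N) :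
    ∑ b : TS N, Qm p a b ≤ 1 := by
  have h := tmat_row_sum hp a.1
  rw [sum_split hAB] at h
  have h1 := tmat_nonneg hp a.1 (stA N)
  have h2 := tmat_nonneg hp a.1 (stB N)
  have : ∑ b : TS N, Qm p a b = ∑ b : TS N, tmat p a.1 b.1 := rfl
  linarith [this ▸ (le_refl (∑ b : TS N, Qm p a b))]

lemma Qm_pow_rowsum_le_one (hp : IsRule p) (hAB : stA N ≠ stB N) :
    ∀ (t : ℕ) (a : TS N), ∑ b : TS N, (Qm p ^ t) a b ≤ 1 := by
  intro t
  induction t with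
  | zero => intro a; simp [Matrix.one_apply]
  | succ t ih =>
    intro a
    rw [pow_succ, rowsum_mul]
    calc ∑ c : TS N, (Qm p ^ t) a c * ∑ b : TS N, Qm p c b
        ≤ ∑ c : TS N, (Qm p ^ t) a c * 1 :=
          Finset.sum_le_sum fun c _ =>
            mul_le_mul_of_nonneg_left (Qm_rowsum_le hp hAB c) (Qm_pow_nonneg hp t a c)
      _ = ∑ c : TS N, (Qm p ^ t) a c := by simp
      _ ≤ 1 := ih a

lemma Qm_pow_rowsum_anti (hp : IsRule p) (hAB : stA N ≠ stB N) (s t : ℕ) (a : TS N) :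
    ∑ b : TS N, (Qm p ^ (s + t)) a b ≤ ∑ b : TS N, (Qm p ^ s) a b := by
  rw [pow_add, rowsum_mul]
  calc ∑ c : TS N, (Qm p ^ s) a c * ∑ b : TS N, (Qm p ^ t) c b
      ≤ ∑ c : TS N, (Qm p ^ s) a c * 1 :=
        Finset.sum_le_sum fun c _ =>
          mul_le_mul_of_nonneg_left (Qm_pow_rowsum_le_one hp hAB t c) (Qm_pow_nonneg hp s a c)
    _ = ∑ b : TS N, (Qm p ^ s) a b := by simp


noncomputable def dead (p : St N → Event N → ℝ) : List (Event N) → St N → ℝ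
  | [], _ => 0
  | e :: L, x => if Transient (upd e x) then p x e * dead p L (upd e x) else p x e

lemma dead_nonneg (hp : IsRule p) : ∀ (L : List (Event N)) (x : St N), 0 ≤ dead p L x := by
  intro L
  induction L with
  | nil => intro x; simp [dead]
  | cons e L ih =>
    intro x
    rw [dead]
    split
    · exact mul_nonneg (hp.1 x e) (ih _)
    · exact hp.1 x e

lemma dead_pos (hp : IsRule p) : ∀ (L : List (Event N)) (x : St N),
    (∀ e ∈ L, ∀ s, 0 < p s e) → Transient x →
    ¬ Transient (L.foldl (fun s e => upd e s) x) → 0 < dead p L x := by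
  intro L
  induction L with
  | nil => intro x _ hx hnx; exact absurd hx hnx
  | cons e L ih =>
    intro x hpos hx hnx
    rw [dead]
    split
    · rename_i h
      exact mul_pos (hpos e List.mem_cons_self x)
        (ih (upd e x) (fun e' he' s => hpos e' (List.mem_cons_of_mem e he') s) h
          (by simpa [List.foldl_cons] using hnx))
    · exact hpos e List.mem_cons_self x

lemma not_transient_iff (x : St N) : ¬ Transient x ↔ x = stA N ∨ x = stB N := by
  simp only [Transient, not_and_or, not_ne_iff]

lemma rowsum_pow_le_dead (hp : IsRule p) (hAB : stA N ≠ stB N) :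
    ∀ (L : List (Event N)) (a : TS N),
      ∑ b : TS N, (Qm p ^ L.length) a b ≤ 1 - dead p L a.1 := by
  intro L
  induction L with
  | nil =>
    intro a
    simp [dead, Matrix.one_apply]
  | cons e L ih =>
    intro a
    have hQnn : ∀ c : TS N, (0:ℝ) ≤ Qm p a c := fun c => tmat_nonneg hp _ _
    have hgnn : ∀ c : TS N, (0:ℝ) ≤ ∑ b : TS N, (Qm p ^ L.length) c b :=
      fun c => Finset.sum_nonneg fun b _ => Qm_pow_nonneg hp _ c b
    have hup : tmat p a.1 (upd e a.1) ≤ 1 := by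
      have h := tmat_row_sum hp a.1
      have := Finset.single_le_sum (f := fun y => tmat p a.1 y)
        (fun y _ => tmat_nonneg hp a.1 y) (Finset.mem_univ (upd e a.1))
      linarith
    rw [List.length_cons, pow_succ', rowsum_mul]
    rw [dead]
    split
    · rename_i h
      set c0 : TS N := ⟨upd e a.1, h⟩
      have key : ∑ c : TS N, Qm p a c * ∑ b : TS N, (Qm p ^ L.length) c b
          ≤ (∑ c : TS N, Qm p a c) - Qm p a c0 * dead p L (upd e a.1) := by
        have h1 : ∀ c : TS N, Qm p a c * ∑ b : TS N, (Qm p ^ L.length) c b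
            ≤ Qm p a c - Qm p a c * dead p L c.1 := fun c => by
          have := mul_le_mul_of_nonneg_left (ih c) (hQnn c)
          nlinarith [hQnn c]
        calc ∑ c : TS N, Qm p a c * ∑ b : TS N, (Qm p ^ L.length) c b
            ≤ ∑ c : TS N, (Qm p a c - Qm p a c * dead p L c.1) :=
              Finset.sum_le_sum fun c _ => h1 c
          _ = (∑ c : TS N, Qm p a c) - ∑ c : TS N, Qm p a c * dead p L c.1 := by
              rw [Finset.sum_sub_distrib]
          _ ≤ (∑ c : TS N, Qm p a c) - Qm p a c0 * dead p L (upd e a.1) := by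
              have : Qm p a c0 * dead p L c0.1 ≤ ∑ c : TS N, Qm p a c * dead p L c.1 :=
                Finset.single_le_sum
                  (f := fun c : TS N => Qm p a c * dead p L c.1)
                  (fun c _ => mul_nonneg (hQnn c) (dead_nonneg hp L c.1))
                  (Finset.mem_univ c0)
              linarith [this]
      have h2 : Qm p a c0 * dead p L (upd e a.1) ≥ p a.1 e * dead p L (upd e a.1) :=
        mul_le_mul_of_nonneg_right (le_tmat hp a.1 e) (dead_nonneg hp L _)
      have h3 := Qm_rowsum_le hp hAB a
      linarith
    · rename_i h
      have habs := (not_transient_iff (upd e a.1)).1 h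
      have hrow : ∑ c : TS N, Qm p a c ≤ 1 - p a.1 e := by
        have hs := tmat_row_sum hp a.1
        rw [sum_split hAB] at hs
        have h1 := tmat_nonneg hp a.1 (stA N)
        have h2 := tmat_nonneg hp a.1 (stB N)
        have hQ : ∑ c : TS N, Qm p a c = ∑ c : TS N, tmat p a.1 c.1 := rfl
        have hle := le_tmat hp a.1 e
        rcases habs with h' | h'
        · rw [h'] at hle; linarith [hQ ▸ le_refl (∑ c : TS N, Qm p a c)]
        · rw [h'] at hle; linarith [hQ ▸ le_refl (∑ c : TS N, Qm p a c)]
      calc ∑ c : TS N, Qm p a c * ∑ b : TS N, (Qm p ^ L.length) c b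
          ≤ ∑ c : TS N, Qm p a c * 1 :=
            Finset.sum_le_sum fun c _ =>
              mul_le_mul_of_nonneg_left (Qm_pow_rowsum_le_one hp hAB L.length c) (hQnn c)
        _ = ∑ c : TS N, Qm p a c := by simp
        _ ≤ 1 - p a.1 e := hrow

lemma foldl_upd : ∀ (L : List (Event N)) (x : St N),
    L.foldl (fun s e => upd e s) x = fun j => x ((L.map extMap).foldr (· ∘ ·) id j) := by
  intro L
  induction L with
  | nil => intro x; rfl
  | cons e L ih =>
    intro x
    rw [List.foldl_cons, ih (upd e x)]
    rfl


lemma summable_pow_div (c : ℝ) (h0 : 0 ≤ c) (h1 : c < 1) (m : ℕ) (hm : 1 ≤ m) :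
    Summable (fun t : ℕ => c ^ (t / m)) := by
  have : NeZero m := ⟨by omega⟩
  have hg : Summable (fun k : ℕ => c ^ k) := summable_geometric_of_lt_one h0 h1
  have hone : Summable (fun _ : Fin m => (1:ℝ)) := Summable.of_finite
  have hprod : Summable (fun pr : ℕ × Fin m => c ^ pr.1 * 1) :=
    hg.mul_of_nonneg hone (fun k => pow_nonneg h0 k) (fun _ => zero_le_one)
  have hprod' : Summable (fun pr : ℕ × Fin m => c ^ pr.1) := by simpa using hprod
  have heq : (fun t : ℕ => c ^ (t / m))
      = (fun pr : ℕ × Fin m => c ^ pr.1) ∘ (Nat.divModEquiv m) := by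
    funext t; simp [Nat.divModEquiv]
  rw [heq, (Nat.divModEquiv m).summable_iff]
  exact hprod'



/-- the rare-mutation conditional probability of a transient state `x` equals
the fraction of sojourn time spent in `x` among all transient states:
`lim_{u→0⁺} π_⟲(ξ)(x)/π_⟲(ξ)(𝔹_T^N) = t_ξ(x)/t_ξ(𝔹_T^N)`. -/
theorem statement3 {N : ℕ} (p : St N → Event N → ℝ) (hp : IsRule p)
    (hfix : FixAxiom p) (ξ : St N) (hξ : Transient ξ)
    (statDist : ℝ → St N → ℝ)
    (hstat : ∀ u ∈ Set.Ioc (0 : ℝ) 1, IsStat (amend p ξ u) (statDist u))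
    (x : St N) (hx : Transient x) :
    Tendsto
      (fun u =>
        statDist u x /
          ∑ y ∈ Finset.univ.filter (fun y : St N => y ≠ stA N ∧ y ≠ stB N), statDist u y)
      (𝓝[>] (0 : ℝ))
      (𝓝 (sojourn p ξ x /
        ∑ y ∈ Finset.univ.filter (fun y : St N => y ≠ stA N ∧ y ≠ stB N), sojourn p ξ y)) := by
  classical
  obtain ⟨i, m, ev, hm1, hpos, -, hcomp⟩ := hfix
  have hAB : stA N ≠ stB N := fun h => by simpa [stA, stB] using congrFun h i
  set ξ' : TS N := ⟨ξ, hξ⟩ with hξ'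
  set x' : TS N := ⟨x, hx⟩ with hx'
  set L : List (Event N) := List.ofFn ev with hL
  have hLlen : L.length = m := List.length_ofFn
  have hLpos : ∀ e ∈ L, ∀ s, 0 < p s e := by
    intro e he s
    rw [hL, List.mem_ofFn] at he
    obtain ⟨k, rfl⟩ := he
    exact hpos k s
  have hend : ∀ x0 : St N, ¬ Transient (L.foldl (fun s e => upd e s) x0) := by
    intro x0
    rw [foldl_upd]
    have hmap : L.map extMap = List.ofFn (fun k => extMap (ev k)) := by
      rw [hL, List.map_ofFn]; rfl
    have hconst : (fun j => x0 ((L.map extMap).foldr (· ∘ ·) id j)) = fun _ => x0 i := by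
      funext j; rw [hmap, hcomp j]
    rw [hconst]
    cases hxi : x0 i
    · rintro ⟨-, h2⟩; exact h2 rfl
    · rintro ⟨h1, -⟩; exact h1 rfl
  -- the minimum absorption weight
  obtain ⟨a0, -, ha0⟩ := Finset.exists_min_image (univ : Finset (TS N))
    (fun a => dead p L a.1) ⟨ξ', Finset.mem_univ _⟩
  set ε : ℝ := dead p L a0.1 with hεdef
  have hε : 0 < ε := dead_pos hp L a0.1 hLpos a0.2 (hend a0.1)
  have hεle : ∀ a : TS N, ∑ b : TS N, (Qm p ^ m) a b ≤ 1 - ε := by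
    intro a
    calc ∑ b : TS N, (Qm p ^ m) a b
        ≤ 1 - dead p L a.1 := by rw [← hLlen]; exact rowsum_pow_le_dead hp hAB L a
      _ ≤ 1 - ε := by have := ha0 a (Finset.mem_univ a); linarith
  have hε1 : ε ≤ 1 := by
    have h0 : (0:ℝ) ≤ ∑ b : TS N, (Qm p ^ m) ξ' b :=
      Finset.sum_nonneg fun b _ => Qm_pow_nonneg hp m ξ' b
    linarith [hεle ξ']
  -- geometric decay of row sums
  have decay : ∀ (k : ℕ) (a : TS N), ∑ b : TS N, (Qm p ^ (m * k)) a b ≤ (1 - ε) ^ k := by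
    intro k
    induction k with
    | zero => intro a; simp [Matrix.one_apply]
    | succ k ih =>
      intro a
      rw [Nat.mul_succ, pow_add, rowsum_mul]
      calc ∑ c : TS N, (Qm p ^ (m*k)) a c * ∑ b : TS N, (Qm p ^ m) c b
          ≤ ∑ c : TS N, (Qm p ^ (m*k)) a c * (1 - ε) :=
            Finset.sum_le_sum fun c _ =>
              mul_le_mul_of_nonneg_left (hεle c) (Qm_pow_nonneg hp _ a c)
        _ = (∑ c : TS N, (Qm p ^ (m*k)) a c) * (1 - ε) := by rw [Finset.sum_mul]
        _ ≤ (1 - ε) ^ k * (1 - ε) :=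
            mul_le_mul_of_nonneg_right (ih a) (by linarith)
        _ = (1 - ε) ^ (k + 1) := by rw [pow_succ]
  have entry : ∀ (t : ℕ) (a b : TS N), (Qm p ^ t) a b ≤ (1 - ε) ^ (t / m) := by
    intro t a b
    have h1 : (Qm p ^ t) a b ≤ ∑ b' : TS N, (Qm p ^ t) a b' :=
      Finset.single_le_sum (fun b' _ => Qm_pow_nonneg hp t a b') (Finset.mem_univ b)
    have h2 : ∑ b' : TS N, (Qm p ^ t) a b' ≤ ∑ b' : TS N, (Qm p ^ (m * (t/m))) a b' := by
      conv_lhs => rw [← Nat.div_add_mod t m]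
      exact Qm_pow_rowsum_anti hp hAB (m * (t/m)) (t % m) a
    exact h1.trans (h2.trans (decay (t/m) a))
  have hsum : ∀ a b : TS N, Summable (fun t : ℕ => (Qm p ^ t) a b) := by
    intro a b
    exact Summable.of_nonneg_of_le (fun t => Qm_pow_nonneg hp t a b) (fun t => entry t a b)
      (summable_pow_div (1-ε) (by linarith) (by linarith) m hm1)
  -- the fundamental matrix
  set S : Matrix (TS N) (TS N) ℝ := Matrix.of (fun a b => ∑' t : ℕ, (Qm p ^ t) a b) with hSdef
  have hSnn : ∀ a b : TS N, 0 ≤ S a b :=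
    fun a b => tsum_nonneg fun t => Qm_pow_nonneg hp t a b
  have hS : (1 - Qm p) * S = 1 := by
    ext a b
    rw [Matrix.mul_apply]
    have hterm : ∀ c : TS N, (1 - Qm p) a c * S c b
        = ∑' t : ℕ, (1 - Qm p) a c * (Qm p ^ t) c b := fun c => by
      rw [hSdef]; exact (tsum_mul_left).symm
    rw [Finset.sum_congr rfl (fun c _ => hterm c),
      ← Summable.tsum_finsetSum (fun c _ => ((hsum c b).mul_left _))]
    have hterm2 : ∀ t : ℕ, (∑ c : TS N, (1 - Qm p) a c * (Qm p ^ t) c b)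
        = (Qm p ^ t) a b - (Qm p ^ (t+1)) a b := by
      intro t
      rw [← Matrix.mul_apply, Matrix.sub_mul, Matrix.one_mul, ← pow_succ']
      rfl
    rw [tsum_congr hterm2,
      Summable.tsum_sub (hsum a b) ((summable_nat_add_iff 1).2 (hsum a b)),
      Summable.tsum_eq_zero_add (hsum a b)]
    simp [Matrix.one_apply]
  -- sojourn identification
  have hsoj : ∀ b : TS N, sojourn p ξ b.1 = S ξ' b := by
    intro b
    exact tsum_congr fun t => pow_trans hp hAB t ξ' b
  set σ : ℝ := ∑ b : TS N, S ξ' b with hσdef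
  have hσ1 : (1:ℝ) ≤ σ := by
    have h1 : (1:ℝ) = (Qm p ^ 0) ξ' ξ' := by simp [Matrix.one_apply]
    have h2 : (Qm p ^ 0) ξ' ξ' ≤ S ξ' ξ' :=
      Summable.le_tsum (hsum ξ' ξ') 0 (fun j _ => Qm_pow_nonneg hp j ξ' ξ')
    have h3 : S ξ' ξ' ≤ σ :=
      Finset.single_le_sum (fun b _ => hSnn ξ' b) (Finset.mem_univ ξ')
    linarith
  have hσpos : 0 < σ := by linarith
  have hfilter : ∀ f : St N → ℝ,
      ∑ y ∈ Finset.univ.filter (fun y : St N => y ≠ stA N ∧ y ≠ stB N), f y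
        = ∑ b : TS N, f b.1 := by
    intro f
    exact Finset.sum_subtype _ (by simp) f
  -- the per-u identity
  have key : ∀ u ∈ Set.Ioc (0:ℝ) 1,
      statDist u x /
        (∑ y ∈ Finset.univ.filter (fun y : St N => y ≠ stA N ∧ y ≠ stB N), statDist u y)
      = S ξ' x' / σ := by
    intro u hu
    obtain ⟨hq0, hq1, hqs⟩ := hstat u hu
    set q : St N → ℝ := statDist u with hq
    set c : ℝ := u * (q (stA N) + q (stB N)) with hc
    -- stationarity on transient states
    have hw : ∀ b : TS N, q b.1 - ∑ a : TS N, q a.1 * Qm p a b = if b = ξ' then c else 0 := by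
      intro b
      have hst := hqs b.1
      rw [sum_split hAB (fun z => q z * amend p ξ u z b.1)] at hst
      have hA : amend p ξ u (stA N) b.1 = if b.1 = ξ then u else 0 := by
        have hne : ¬ (stA N = b.1) := fun h => b.2.1 h.symm
        have h1 : amend p ξ u (stA N) b.1
            = if b.1 = ξ then u else (1 - u) * tmat p (stA N) b.1 := by
          simp [amend]
        rw [h1, tmat_stA hp, if_neg hne, mul_zero]
      have hB : amend p ξ u (stB N) b.1 = if b.1 = ξ then u else 0 := by
        have hne : ¬ (stB N = b.1) := fun h => b.2.2 h.symm
        have h1 : amend p ξ u (stB N) b.1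
            = if b.1 = ξ then u else (1 - u) * tmat p (stB N) b.1 := by
          simp [amend]
        rw [h1, tmat_stB hp, if_neg hne, mul_zero]
      have hT : ∀ a : TS N, amend p ξ u a.1 b.1 = Qm p a b := by
        intro a
        have hne : ¬ (a.1 = stA N ∨ a.1 = stB N) := by
          rintro (h | h)
          · exact a.2.1 h
          · exact a.2.2 h
        simp only [amend, Matrix.of_apply, if_neg hne]
        rfl
      rw [hA, hB, Finset.sum_congr rfl (fun a _ => by rw [hT a])] at hst
      have hbiff : (b = ξ') ↔ (b.1 = ξ) := Subtype.ext_iff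
      by_cases hbξ : b.1 = ξ
      · rw [if_pos (hbiff.2 hbξ), hc]
        rw [if_pos hbξ] at hst
        linarith [hst]
      · rw [if_neg (fun h => hbξ (hbiff.1 h))]
        rw [if_neg hbξ] at hst
        linarith [hst]
    -- invert
    set w : TS N → ℝ := fun b => if b = ξ' then c else 0 with hwdef
    have h1 : Matrix.vecMul (fun a : TS N => q a.1) (1 - Qm p) = w := by
      funext b
      have h2 : Matrix.vecMul (fun a : TS N => q a.1) (1 - Qm p) b
          = ∑ a : TS N, (q a.1 * (if a = b then 1 else 0) - q a.1 * Qm p a b) := by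
        simp only [Matrix.vecMul, dotProduct, Matrix.sub_apply, Matrix.one_apply, mul_sub]
      rw [h2, Finset.sum_sub_distrib]
      have h3 : ∑ a : TS N, q a.1 * (if a = b then 1 else 0) = q b.1 := by
        simp [mul_ite, Finset.sum_ite_eq']
      rw [h3]
      exact hw b
    have hvw : (fun a : TS N => q a.1) = Matrix.vecMul w S := by
      calc (fun a : TS N => q a.1) = Matrix.vecMul (fun a : TS N => q a.1) 1 :=
            (Matrix.vecMul_one _).symm
        _ = Matrix.vecMul (fun a : TS N => q a.1) ((1 - Qm p) * S) := by rw [hS]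
        _ = Matrix.vecMul (Matrix.vecMul (fun a : TS N => q a.1) (1 - Qm p)) S :=
            (Matrix.vecMul_vecMul _ _ S).symm
        _ = Matrix.vecMul w S := by rw [h1]
    have hvc : ∀ b : TS N, q b.1 = c * S ξ' b := by
      intro b
      have hb := congrFun hvw b
      have h4 : Matrix.vecMul w S b = c * S ξ' b := by
        simp only [Matrix.vecMul, dotProduct, hwdef, ite_mul, zero_mul]
        rw [Finset.sum_ite_eq' univ ξ' (fun z => c * S z b)]
        simp
      simpa [h4] using hb
    -- positivity of c
    have hqABnn : 0 ≤ q (stA N) + q (stB N) := add_nonneg (hq0 _) (hq0 _)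
    have hqABne : q (stA N) + q (stB N) ≠ 0 := by
      intro h0
      have hA0 : q (stA N) = 0 := by linarith [hq0 (stA N), hq0 (stB N)]
      have hB0 : q (stB N) = 0 := by linarith [hq0 (stA N), hq0 (stB N)]
      have hc0 : c = 0 := by rw [hc, h0, mul_zero]
      have hsum1 := hq1
      rw [sum_split hAB q] at hsum1
      have hz : ∑ a : TS N, q a.1 = 0 :=
        Finset.sum_eq_zero fun a _ => by rw [hvc a, hc0, zero_mul]
      rw [hA0, hB0, hz] at hsum1
      norm_num at hsum1
    have hcpos : 0 < c := mul_pos hu.1 (lt_of_le_of_ne hqABnn (Ne.symm hqABne))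
    -- conclude
    have hden : (∑ y ∈ Finset.univ.filter (fun y : St N => y ≠ stA N ∧ y ≠ stB N), q y)
        = c * σ := by
      rw [hfilter q, Finset.sum_congr rfl (fun b _ => hvc b), ← Finset.mul_sum, hσdef]
    show q x / (∑ y ∈ Finset.univ.filter (fun y : St N => y ≠ stA N ∧ y ≠ stB N), q y)
        = S ξ' x' / σ
    rw [hden, show q x = c * S ξ' x' from hvc x', mul_div_mul_left _ _ (ne_of_gt hcpos)]
  -- final limit
  have hgoalden : (∑ y ∈ Finset.univ.filter (fun y : St N => y ≠ stA N ∧ y ≠ stB N),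
      sojourn p ξ y) = σ := by
    rw [hfilter fun y => sojourn p ξ y]
    exact Finset.sum_congr rfl fun b _ => hsoj b
  rw [hgoalden, show sojourn p ξ x = S ξ' x' from hsoj x']
  have hev : (fun u : ℝ => S ξ' x' / σ) =ᶠ[𝓝[>] (0:ℝ)]
      (fun u => statDist u x /
        ∑ y ∈ Finset.univ.filter (fun y : St N => y ≠ stA N ∧ y ≠ stB N), statDist u y) := by
    filter_upwards [Ioc_mem_nhdsGT_of_mem (Set.left_mem_Ico.2 zero_lt_one)] with u hu
    exact (key u hu).symm
  exact Filter.Tendsto.congr' hev tendsto_const_nhds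



end Evo
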